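/- Let k be a field of characteristic zero and (R,Δ) a commutative differential k-algebra with R noetherian. Then the rule π(Q) = (Q:Δ) defines a continuous retraction π : spec R → Δ-spec R (i.e., π is continuous and restricts to the identity on Δ-spec R ⊆ spec R), and the Zariski topology on Δ-spec R equals the quotient topology induced by π: a subset W ⊆ Δ-spec R is closed if and only if π^{-1}(W) is closed in spec R. -/

import Mathlib

section Defs

variable {k R : Type*} [CommRing k] [CommRing R] [Algebra k R]

/-- An ideal stable under all derivations in `Δ`. -/
def IsDeltaIdeal (Δ : Set (Derivation k R R)) (I : Ideal R) : Prop :=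
  ∀ δ ∈ Δ, ∀ x ∈ I, δ x ∈ I

/-- The `Δ`-core of an ideal `J`: the largest `Δ`-stable ideal contained in `J`. -/
def deltaCore (Δ : Set (Derivation k R R)) (J : Ideal R) : Ideal R :=
  sSup {I : Ideal R | IsDeltaIdeal Δ I ∧ I ≤ J}

/-- A `Δ`-prime ideal: a proper `Δ`-ideal `Q` such that whenever a product of two
`Δ`-ideals lies in `Q`, one of them lies in `Q`. -/
def IsDeltaPrime (Δ : Set (Derivation k R R)) (Q : Ideal R) : Prop :=
  Q ≠ ⊤ ∧ IsDeltaIdeal Δ Q ∧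
    ∀ I J : Ideal R, IsDeltaIdeal Δ I → IsDeltaIdeal Δ J → I * J ≤ Q → I ≤ Q ∨ J ≤ Q

/-- A `Δ`-primitive ideal: the `Δ`-core of a maximal ideal. -/
def IsDeltaPrimitive (Δ : Set (Derivation k R R)) (P : Ideal R) : Prop :=
  ∃ M : Ideal R, M.IsMaximal ∧ deltaCore Δ M = P

end Defs

section Aux

variable {k R : Type*} [CommRing k] [CommRing R] [Algebra k R] {Δ : Set (Derivation k R R)}

lemma deltaCore_le (Δ : Set (Derivation k R R)) (J : Ideal R) : deltaCore Δ J ≤ J :=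
  sSup_le fun _ hI => hI.2

lemma le_deltaCore {I J : Ideal R} (h1 : IsDeltaIdeal Δ I) (h2 : I ≤ J) : I ≤ deltaCore Δ J :=
  le_sSup ⟨h1, h2⟩

lemma isDeltaIdeal_sup {I J : Ideal R} (hI : IsDeltaIdeal Δ I) (hJ : IsDeltaIdeal Δ J) :
    IsDeltaIdeal Δ (I ⊔ J) := by
  intro δ hδ x hx
  rcases Submodule.mem_sup.mp hx with ⟨a, ha, b, hb, rfl⟩
  rw [map_add]
  exact Submodule.add_mem_sup (hI δ hδ a ha) (hJ δ hδ b hb)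

lemma isDeltaIdeal_deltaCore (Δ : Set (Derivation k R R)) (J : Ideal R) :
    IsDeltaIdeal Δ (deltaCore Δ J) := by
  intro δ hδ x hx
  have hdir : DirectedOn (· ≤ ·) {I : Ideal R | IsDeltaIdeal Δ I ∧ I ≤ J} := by
    intro I hI K hK
    exact ⟨I ⊔ K, ⟨isDeltaIdeal_sup hI.1 hK.1, sup_le hI.2 hK.2⟩, le_sup_left, le_sup_right⟩
  have hne : {I : Ideal R | IsDeltaIdeal Δ I ∧ I ≤ J}.Nonempty :=
    ⟨⊥, fun δ _ x hx => by simp_all, bot_le⟩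
  obtain ⟨I, hI, hxI⟩ := (Submodule.mem_sSup_of_directed hne hdir).mp hx
  exact le_sSup hI (hI.1 δ hδ x hxI)

lemma isDeltaIdeal_mul {I J : Ideal R} (hI : IsDeltaIdeal Δ I) (hJ : IsDeltaIdeal Δ J) :
    IsDeltaIdeal Δ (I * J) := by
  intro δ hδ x hx
  refine Submodule.mul_induction_on hx (fun a ha b hb => ?_) (fun x y hx' hy' => ?_)
  · rw [Derivation.leibniz, smul_eq_mul, smul_eq_mul]
    exact add_mem (Ideal.mul_mem_mul ha (hJ δ hδ b hb))
      (mul_comm b (δ a) ▸ Ideal.mul_mem_mul (hI δ hδ a ha) hb)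
  · rw [map_add]; exact add_mem hx' hy'

end Aux

section CharZero

variable {R : Type*} [CommRing R]

lemma nat_mul_mem (k : Type*) [Field k] [CharZero k] [Algebra k R] {I : Ideal R} {x : R} {m : ℕ} (hm : m ≠ 0) (h : (m : R) * x ∈ I) : x ∈ I := by
  have h1 : algebraMap k R ((m : k)⁻¹) * ((m : R) * x) ∈ I := I.mul_mem_left _ h
  have h2 : algebraMap k R ((m : k)⁻¹) * (m : R) = 1 := by
    rw [← map_natCast (algebraMap k R) m, ← map_mul,
      inv_mul_cancel₀ (Nat.cast_ne_zero.mpr hm), map_one]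
  rwa [← mul_assoc, h2, one_mul] at h1

lemma isDeltaIdeal_radical {k : Type*} [Field k] [CharZero k] [Algebra k R]
    {Δ : Set (Derivation k R R)} {I : Ideal R} (hI : IsDeltaIdeal Δ I) :
    IsDeltaIdeal Δ I.radical := by
  intro δ hδ a ha
  obtain ⟨n, hn⟩ := ha
  set d := δ a with hd
  -- step lemma
  have step : ∀ m s : ℕ, m ≠ 0 → a ^ m * d ^ s ∈ I → a ^ (m - 1) * d ^ (s + 2) ∈ I := by
    intro m s hm hmem
    obtain ⟨t, rfl⟩ := Nat.exists_eq_succ_of_ne_zero hm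
    have hDmem : δ (a ^ (t + 1) * d ^ s) ∈ I := hI δ hδ _ hmem
    cases s with
    | zero =>
      have hD : δ (a ^ (t + 1) * d ^ 0) = (t + 1 : ℕ) • a ^ t • d := by
        rw [pow_zero, mul_one, Derivation.leibniz_pow]; simp; rfl
      have hX : d * δ (a ^ (t + 1) * d ^ 0) ∈ I := I.mul_mem_left _ hDmem
      have key : ((t + 1 : ℕ) : R) * (a ^ (t + 1 - 1) * d ^ (0 + 2)) =
          d * δ (a ^ (t + 1) * d ^ 0) := by
        rw [hD]; simp [smul_eq_mul]; ring
      exact nat_mul_mem k (Nat.succ_ne_zero t) (key ▸ hX)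
    | succ u =>
      have hD : δ (a ^ (t + 1) * d ^ (u + 1)) =
          a ^ (t + 1) * ((u + 1 : ℕ) • d ^ u • δ d) + d ^ (u + 1) * ((t + 1 : ℕ) • a ^ t • d) := by
        rw [Derivation.leibniz, Derivation.leibniz_pow, Derivation.leibniz_pow]
        simp [smul_eq_mul]; rfl
      have hX : d * δ (a ^ (t + 1) * d ^ (u + 1)) ∈ I := I.mul_mem_left _ hDmem
      have hY : ((u + 1 : ℕ) : R) * δ d * (a ^ (t + 1) * d ^ (u + 1)) ∈ I := I.mul_mem_left _ hmem
      have key : ((t + 1 : ℕ) : R) * (a ^ (t + 1 - 1) * d ^ (u + 1 + 2)) =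
          d * δ (a ^ (t + 1) * d ^ (u + 1)) -
            ((u + 1 : ℕ) : R) * δ d * (a ^ (t + 1) * d ^ (u + 1)) := by
        rw [hD]; simp [smul_eq_mul]; push_cast; ring
      exact nat_mul_mem k (Nat.succ_ne_zero t) (key ▸ sub_mem hX hY)
  have key : ∀ j : ℕ, j ≤ n → a ^ (n - j) * d ^ (2 * j) ∈ I := by
    intro j
    induction j with
    | zero => intro _; simpa using hn
    | succ j ih =>
      intro hj
      have h1 := ih (Nat.le_of_succ_le hj)
      have h2 := step (n - j) (2 * j) (by omega) h1
      have heq1 : n - (j + 1) = n - j - 1 := by omega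
      have heq2 : 2 * (j + 1) = 2 * j + 2 := by ring
      rw [heq1, heq2]
      exact h2
  rw [Ideal.mem_radical_iff]
  exact ⟨2 * n, by simpa using key n le_rfl⟩

end CharZero

section Noetherian

variable {k R : Type*} [Field k] [CharZero k] [CommRing R] [Algebra k R]
  {Δ : Set (Derivation k R R)}

lemma minimalPrimes_finite [IsNoetherianRing R] (I : Ideal R) : I.minimalPrimes.Finite := by
  rw [Ideal.minimalPrimes_eq_comap]
  exact Set.Finite.image _ (minimalPrimes.finite_of_isNoetherianRing (R ⧸ I))

lemma isDeltaIdeal_of_mem_minimalPrimes [IsNoetherianRing R] {I P : Ideal R}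
    (hI : IsDeltaIdeal Δ I) (hP : P ∈ I.minimalPrimes) : IsDeltaIdeal Δ P := by
  classical
  have hfin : I.minimalPrimes.Finite := minimalPrimes_finite I
  have hPprime : P.IsPrime := hP.1.1
  have hJ : IsDeltaIdeal Δ I.radical := isDeltaIdeal_radical hI
  have hsInf : sInf I.minimalPrimes = I.radical := Ideal.sInf_minimalPrimes
  -- find y in all other minimal primes but not in P
  set S := I.minimalPrimes \ {P} with hS
  have hSfin : S.Finite := hfin.diff
  have hy : ∃ y ∈ sInf S, y ∉ P := by
    by_contra h
    push_neg at h
    have hle : sInf S ≤ P := h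
    rw [← hSfin.coe_toFinset, ← Finset.inf_id_eq_sInf] at hle
    obtain ⟨P', hP's, hP'le⟩ := (Ideal.IsPrime.inf_le' hPprime).mp hle
    rw [Set.Finite.mem_toFinset] at hP's
    exact hP's.2 (le_antisymm (hP.2 hP's.1.1 hP'le) hP'le).symm
  obtain ⟨y, hyK, hyP⟩ := hy
  intro δ hδ x hx
  have hxy : x * y ∈ I.radical := by
    rw [← hsInf, Submodule.mem_sInf]
    intro P' hP'
    by_cases h : P' = P
    · exact h ▸ P.mul_mem_right y hx
    · exact Ideal.mul_mem_left _ x (Submodule.mem_sInf.mp hyK P' ⟨hP', h⟩)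
  have hδxy : δ (x * y) ∈ P := by
    have := hJ δ hδ _ hxy
    have hradP : I.radical ≤ P := hsInf ▸ sInf_le hP
    exact hradP this
  rw [Derivation.leibniz, smul_eq_mul, smul_eq_mul] at hδxy
  have h1 : x * δ y ∈ P := P.mul_mem_right _ hx
  have h2 : y * δ x ∈ P := by
    have := P.sub_mem hδxy h1
    simpa using this
  exact (hPprime.mem_or_mem h2).resolve_left hyP

lemma isDeltaIdeal_listProd : ∀ l : List (Ideal R), (∀ I ∈ l, IsDeltaIdeal Δ I) →
    IsDeltaIdeal Δ l.prod := by
  intro l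
  induction l with
  | nil => intro _; simp only [List.prod_nil, Ideal.one_eq_top]; intro δ _ x _; exact trivial
  | cons I l ih =>
    intro h
    rw [List.prod_cons]
    exact isDeltaIdeal_mul (h I List.mem_cons_self) (ih fun J hJ => h J (List.mem_cons_of_mem I hJ))

lemma deltaPrime_list {Q : Ideal R} (hQ : IsDeltaPrime Δ Q) :
    ∀ l : List (Ideal R), (∀ I ∈ l, IsDeltaIdeal Δ I) → l.prod ≤ Q → ∃ I ∈ l, I ≤ Q := by
  intro l
  induction l with
  | nil =>
    intro _ hle
    rw [List.prod_nil, Ideal.one_eq_top, top_le_iff] at hle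
    exact absurd hle hQ.1
  | cons I l ih =>
    intro h hle
    rw [List.prod_cons] at hle
    rcases hQ.2.2 I l.prod (h I List.mem_cons_self)
      (isDeltaIdeal_listProd l fun J hJ => h J (List.mem_cons_of_mem I hJ)) hle with h1 | h1
    · exact ⟨I, List.mem_cons_self, h1⟩
    · obtain ⟨J, hJl, hJQ⟩ := ih (fun J hJ => h J (List.mem_cons_of_mem I hJ)) h1
      exact ⟨J, List.mem_cons_of_mem I hJl, hJQ⟩

lemma list_prod_le_of_mem : ∀ (l : List (Ideal R)) (P : Ideal R), P ∈ l → l.prod ≤ P := by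
  intro l
  induction l with
  | nil => intro P hP; simp at hP
  | cons I l ih =>
    intro P hP
    rw [List.prod_cons]
    rcases List.mem_cons.mp hP with rfl | hP
    · exact Ideal.mul_le_left
    · exact le_trans Ideal.mul_le_right (ih P hP)

theorem IsDeltaPrime.isPrime [IsNoetherianRing R] {Q : Ideal R}
    (hQ : IsDeltaPrime Δ Q) : Q.IsPrime := by
  classical
  have hfin : Q.minimalPrimes.Finite := minimalPrimes_finite Q
  set l : List (Ideal R) := hfin.toFinset.toList with hl
  have hmem : ∀ P : Ideal R, P ∈ l ↔ P ∈ Q.minimalPrimes := by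
    intro P; rw [hl, Finset.mem_toList, Set.Finite.mem_toFinset]
  have hlD : ∀ P ∈ l, IsDeltaIdeal Δ P := fun P hP =>
    isDeltaIdeal_of_mem_minimalPrimes hQ.2.1 ((hmem P).mp hP)
  have hprodrad : l.prod ≤ Q.radical := by
    rw [← Ideal.sInf_minimalPrimes]
    exact le_sInf fun P hP => list_prod_le_of_mem l P ((hmem P).mpr hP)
  obtain ⟨m, hm⟩ := Ideal.exists_radical_pow_le_of_fg Q (IsNoetherian.noetherian _)
  have hDprod : IsDeltaIdeal Δ l.prod := isDeltaIdeal_listProd l hlD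
  have hrep : (List.replicate m l.prod).prod ≤ Q := by
    rw [List.prod_replicate]
    exact le_trans (pow_le_pow_left' hprodrad m) hm
  obtain ⟨J, hJmem, hJQ⟩ := deltaPrime_list hQ (List.replicate m l.prod)
    (fun J hJ => (List.eq_of_mem_replicate hJ) ▸ hDprod) hrep
  have hJ : J = l.prod := List.eq_of_mem_replicate hJmem
  obtain ⟨P, hPl, hPQ⟩ := deltaPrime_list hQ l hlD (hJ ▸ hJQ)
  have hPmin := (hmem P).mp hPl
  have : Q = P := le_antisymm hPmin.1.2 hPQ
  exact this ▸ hPmin.1.1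

end Noetherian

section Closure

variable {k R : Type*} [CommRing k] [CommRing R] [Algebra k R]

/-- The smallest `Δ`-ideal containing `I`. -/
def deltaClosure (Δ : Set (Derivation k R R)) (I : Ideal R) : Ideal R :=
  sInf {K : Ideal R | IsDeltaIdeal Δ K ∧ I ≤ K}

variable {Δ : Set (Derivation k R R)}

lemma le_deltaClosure (I : Ideal R) : I ≤ deltaClosure Δ I :=
  le_sInf fun _ hK => hK.2

lemma isDeltaIdeal_deltaClosure (I : Ideal R) : IsDeltaIdeal Δ (deltaClosure Δ I) := by
  intro δ hδ x hx
  unfold deltaClosure at hx ⊢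
  rw [Submodule.mem_sInf] at hx ⊢
  intro K hK
  exact hK.1 δ hδ x (hx K hK)

lemma le_deltaCore_iff {I J : Ideal R} : I ≤ deltaCore Δ J ↔ deltaClosure Δ I ≤ J := by
  constructor
  · intro h
    exact le_trans (sInf_le (⟨isDeltaIdeal_deltaCore Δ J, h⟩ : _ ∈ {K : Ideal R | IsDeltaIdeal Δ K ∧ I ≤ K}))
      (deltaCore_le Δ J)
  · intro h
    exact le_trans (le_deltaClosure I) (le_deltaCore (isDeltaIdeal_deltaClosure I) h)

end Closure


/-- For `R` noetherian, `π(Q) = (Q:Δ)` defines a continuous retraction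
`π : spec R → Δ-spec R`, and the Zariski topology on `Δ-spec R` (whose closed sets are
the sets `{Q ∈ Δ-spec R : I ≤ Q}` for ideals `I`) is the quotient topology induced by
`π`: a subset `W ⊆ Δ-spec R` is closed iff `π⁻¹(W)` is closed in `spec R`. -/
theorem deltaCore_continuous_retraction_quotient_topology
    {k R : Type*} [Field k] [CharZero k] [CommRing R] [Algebra k R] [IsNoetherianRing R]
    (Δ : Set (Derivation k R R)) :
    -- π maps spec R into Δ-spec R
    (∀ Q : PrimeSpectrum R, IsDeltaPrime Δ (deltaCore Δ Q.asIdeal)) ∧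
    -- π restricts to the identity on Δ-spec R ⊆ spec R
    (∀ Q : PrimeSpectrum R, IsDeltaPrime Δ Q.asIdeal → deltaCore Δ Q.asIdeal = Q.asIdeal) ∧
    -- π is continuous: the preimage of each Zariski-closed subset of Δ-spec R is closed
    (∀ I : Ideal R, IsClosed {Q : PrimeSpectrum R | I ≤ deltaCore Δ Q.asIdeal}) ∧
    -- the topology on Δ-spec R is the quotient topology induced by π
    (∀ W : Set (Ideal R), W ⊆ {Q : Ideal R | IsDeltaPrime Δ Q} →
      ((∃ I : Ideal R, W = {Q : Ideal R | IsDeltaPrime Δ Q ∧ I ≤ Q}) ↔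
        IsClosed {Q : PrimeSpectrum R | deltaCore Δ Q.asIdeal ∈ W})) := by
  have part1 : ∀ Q : PrimeSpectrum R, IsDeltaPrime Δ (deltaCore Δ Q.asIdeal) := by
    intro Q
    refine ⟨?_, isDeltaIdeal_deltaCore Δ Q.asIdeal, ?_⟩
    · intro h
      exact Q.isPrime.ne_top (top_le_iff.mp (h ▸ deltaCore_le Δ Q.asIdeal))
    · intro I J hI hJ hle
      rcases Q.isPrime.mul_le.mp (hle.trans (deltaCore_le Δ Q.asIdeal)) with h | h
      · exact Or.inl (le_deltaCore hI h)
      · exact Or.inr (le_deltaCore hJ h)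
  have part2 : ∀ Q : PrimeSpectrum R, IsDeltaPrime Δ Q.asIdeal →
      deltaCore Δ Q.asIdeal = Q.asIdeal := fun Q hQ =>
    le_antisymm (deltaCore_le Δ Q.asIdeal) (le_deltaCore hQ.2.1 le_rfl)
  have part3 : ∀ I : Ideal R, IsClosed {Q : PrimeSpectrum R | I ≤ deltaCore Δ Q.asIdeal} := by
    intro I
    have heq : {Q : PrimeSpectrum R | I ≤ deltaCore Δ Q.asIdeal} =
        PrimeSpectrum.zeroLocus (deltaClosure Δ I : Set R) := by
      ext Q
      rw [Set.mem_setOf_eq, PrimeSpectrum.mem_zeroLocus, ← SetLike.coe_subset_coe] at *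
      exact ⟨fun h => le_deltaCore_iff.mp h, fun h => le_deltaCore_iff.mpr h⟩
    rw [heq]
    exact PrimeSpectrum.isClosed_zeroLocus _
  refine ⟨part1, part2, part3, ?_⟩
  intro W hWsub
  constructor
  · rintro ⟨I, rfl⟩
    have heq : {Q : PrimeSpectrum R | deltaCore Δ Q.asIdeal ∈
        {Q : Ideal R | IsDeltaPrime Δ Q ∧ I ≤ Q}} =
        {Q : PrimeSpectrum R | I ≤ deltaCore Δ Q.asIdeal} := by
      ext Q
      exact and_iff_right (part1 Q)
    rw [heq]
    exact part3 I
  · intro hC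
    obtain ⟨I₀, hI₀⟩ := (PrimeSpectrum.isClosed_iff_zeroLocus_ideal _).mp hC
    refine ⟨I₀, ?_⟩
    ext Q
    constructor
    · intro hQW
      have hQp : IsDeltaPrime Δ Q := hWsub hQW
      have hprime : Q.IsPrime := hQp.isPrime
      set q : PrimeSpectrum R := ⟨Q, hprime⟩ with hq
      have hmem : q ∈ {Q : PrimeSpectrum R | deltaCore Δ Q.asIdeal ∈ W} := by
        show deltaCore Δ Q ∈ W
        rwa [part2 q hQp]
      rw [hI₀, PrimeSpectrum.mem_zeroLocus] at hmem
      exact ⟨hQp, fun x hx => hmem hx⟩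
    · rintro ⟨hQp, hIQ⟩
      have hprime : Q.IsPrime := hQp.isPrime
      set q : PrimeSpectrum R := ⟨Q, hprime⟩ with hq
      have hmem : q ∈ PrimeSpectrum.zeroLocus (I₀ : Set R) := by
        rw [PrimeSpectrum.mem_zeroLocus]
        exact fun x hx => hIQ hx
      rw [← hI₀] at hmem
      have : deltaCore Δ Q ∈ W := hmem
      rwa [part2 q hQp] at this
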